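/- Let m be odd with 1 ≤ l ≤ m-1, and let f(x) = x^m + x^{m-1} + ... + x^{l+1} + x^{l-1} + ... + x + 1 ∈ F_2[x] be a maximum weight polynomial. Suppose there exists a trinomial g(x) = x^a + x^b + 1 over F_2 with 0 < b < a ≤ 2m such that f(x) divides g(x). Then f(x) or its reciprocal f*(x) = x^m·f(1/x) is one of the following seven polynomials: x^3 + x + 1; x^3 + x^2 + 1; x^5 + x^3 + x^2 + x + 1; x^5 + x^4 + x^3 + x + 1; x^5 + x^4 + x^3 + x^2 + 1; x^7 + x^6 + x^5 + x^4 + x^3 + x + 1; x^7 + x^6 + x^5 + x^4 + x^3 + x^2 + 1. -/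

import Mathlib

open Polynomial
set_option maxHeartbeats 4000000

local notation "K" => ZMod 2

lemma two_eq_zeroP : (2 : Polynomial K) = 0 := by
  have : ((2:ℕ) : Polynomial K) = 0 := by
    rw [← map_natCast (C : K →+* _) 2, show ((2:ℕ) : K) = 0 from by decide]
    simp
  simpa using this

lemma charTwoP : ∀ p : Polynomial K, p + p = 0 := by
  intro p
  have : p + p = 2 * p := by ring
  rw [this, two_eq_zeroP, zero_mul]

noncomputable def Fold (n : ℕ) : Polynomial K →+ Polynomial K where
  toFun p := ⟨AddMonoidAlgebra.mapDomain (· % n) p.toFinsupp⟩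
  map_zero' := by simp
  map_add' p q := by
    rcases p with ⟨p⟩; rcases q with ⟨q⟩
    simp [← Polynomial.ofFinsupp_add]; exact AddMonoidAlgebra.mapDomain_add _ _ _

lemma Fold_monomial (n i : ℕ) (c : K) : Fold n (monomial i c) = monomial (i % n) c := by
  simp [Fold, Polynomial.toFinsupp_monomial, AddMonoidAlgebra.mapDomain_single, Polynomial.ofFinsupp_single]

lemma Fold_support_subset (n : ℕ) (p : Polynomial K) :
    (Fold n p).support ⊆ p.support.image (· % n) := by
  rcases p with ⟨p⟩
  simpa [Fold, Polynomial.support_ofFinsupp, AddMonoidAlgebra.mapDomain, AddMonoidAlgebra.coeff_ofCoeff] using Finsupp.mapDomain_support (f := (· % n)) (s := p.coeff)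

lemma Fold_card_le (n : ℕ) (p : Polynomial K) :
    (Fold n p).support.card ≤ p.support.card :=
  le_trans (Finset.card_le_card (Fold_support_subset n p)) (Finset.card_image_le)

lemma Fold_X_pow_mul (n : ℕ) (p : Polynomial K) : Fold n (X ^ n * p) = Fold n p := by
  induction p using Polynomial.induction_on' with
  | add u v hu hv => rw [mul_add, map_add, hu, hv, map_add]
  | monomial i c =>
      rw [X_pow_eq_monomial, monomial_mul_monomial, one_mul, Fold_monomial, Fold_monomial,
        Nat.add_mod_left]

lemma Fold_Xn_add_one_mul (n : ℕ) (r : Polynomial K) : Fold n ((X ^ n + 1) * r) = 0 := by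
  have h : (X ^ n + 1) * r = X ^ n * r + r := by ring
  rw [h, map_add, Fold_X_pow_mul]
  exact charTwoP _

lemma Fold_card_eq (n : ℕ) (p : Polynomial K)
    (h : Set.InjOn (· % n) p.support) :
    (Fold n p).support.card = p.support.card := by
  rcases p with ⟨p⟩
  rw [Polynomial.support_ofFinsupp] at h
  have hs : (Fold n ⟨p⟩).support = p.coeff.support.image (· % n) := by
    show (Polynomial.ofFinsupp (AddMonoidAlgebra.mapDomain (· % n) p)).support = _
    rw [Polynomial.support_ofFinsupp]
    exact Finsupp.mapDomain_support_of_injOn p.coeff h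
  rw [hs, Finset.card_image_of_injOn h, Polynomial.support_ofFinsupp]

lemma support_X_pow_mul (l : ℕ) (p : Polynomial K) :
    (X ^ l * p).support = p.support.image (l + ·) := by
  ext e
  simp only [Polynomial.mem_support_iff, Finset.mem_image]
  rw [show X ^ l * p = p * X ^ l from mul_comm _ _, Polynomial.coeff_mul_X_pow']
  constructor
  · intro h
    split_ifs at h with hle
    · exact ⟨e - l, h, by omega⟩
    · simp at h
  · rintro ⟨i, hi, rfl⟩
    simpa [Nat.add_sub_cancel_left] using hi

lemma card_support_X_pow_mul (l : ℕ) (p : Polynomial K) :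
    (X ^ l * p).support.card = p.support.card := by
  rw [support_X_pow_mul, Finset.card_image_of_injective]
  exact fun a b h => by omega

lemma wle (u v : Polynomial K) :
    (u + v).support.card ≤ u.support.card + v.support.card :=
  le_trans (Finset.card_le_card (fun a ha => Polynomial.support_add ha)) (Finset.card_union_le _ _)

lemma wge (u v : Polynomial K) :
    u.support.card ≤ (u + v).support.card + v.support.card := by
  have h : (u + v) + v = u := by rw [add_assoc, charTwoP, add_zero]
  calc u.support.card = ((u+v)+v).support.card := by rw [h]
    _ ≤ _ := wle _ _

lemma card_support_X_pow_le (k : ℕ) : (X ^ k : Polynomial K).support.card ≤ 1 := by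
  rw [X_pow_eq_monomial]
  exact le_trans (Finset.card_le_card (Polynomial.support_monomial' k 1)) (by simp)

-- support bound for Fold applied to a shifted polynomial of small degree
lemma Fold_card_shift (n l : ℕ) (p : Polynomial K) (hp : p.natDegree ≤ n - 1) (hn : 1 ≤ n) :
    (Fold n (X ^ l * p)).support.card = p.support.card := by
  rw [Fold_card_eq, card_support_X_pow_mul]
  intro e1 h1 e2 h2 he
  simp only [Finset.coe_image, Set.mem_image] at *
  rw [support_X_pow_mul] at h1 h2
  simp only [Finset.coe_image, Set.mem_image, Finset.mem_coe] at h1 h2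
  obtain ⟨i1, hi1, rfl⟩ := h1
  obtain ⟨i2, hi2, rfl⟩ := h2
  have hd1 : i1 ≤ n - 1 := le_trans (Polynomial.le_natDegree_of_mem_supp _ hi1) hp
  have hd2 : i2 ≤ n - 1 := le_trans (Polynomial.le_natDegree_of_mem_supp _ hi2) hp
  have hmod : Nat.ModEq n (l + i1) (l + i2) := he
  have hdvd : (n:ℤ) ∣ ((l:ℤ) + i2) - ((l:ℤ) + i1) := by
    have := Nat.ModEq.dvd hmod
    push_cast at this ⊢
    exact this
  have hz : ((l:ℤ) + i2) - ((l:ℤ) + i1) = 0 := by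
    apply Int.eq_zero_of_abs_lt_dvd hdvd
    have h1' : (i1:ℤ) ≤ (n:ℤ) - 1 := by
      have : (1:ℤ) ≤ n := by exact_mod_cast hn
      have : (i1:ℤ) ≤ ((n-1 : ℕ) : ℤ) := by exact_mod_cast hd1
      omega
    have h2' : (i2:ℤ) ≤ (n:ℤ) - 1 := by
      have : (1:ℤ) ≤ n := by exact_mod_cast hn
      have : (i2:ℤ) ≤ ((n-1 : ℕ) : ℤ) := by exact_mod_cast hd2
      omega
    have hn' : (1:ℤ) ≤ n := by exact_mod_cast hn
    rw [show ((l:ℤ) + i2) - ((l:ℤ) + i1) = (i2:ℤ) - i1 by ring, abs_sub_lt_iff]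
    omega
  omega

lemma coeff_S (n e : ℕ) : (∑ i ∈ Finset.range n, X ^ i : Polynomial K).coeff e =
    if e < n then 1 else 0 := by
  rw [Polynomial.finset_sum_coeff]
  simp only [Polynomial.coeff_X_pow]
  rw [Finset.sum_ite_eq (Finset.range n) e (fun _ => (1:K))]
  simp [Finset.mem_range]

lemma support_S (n : ℕ) : (∑ i ∈ Finset.range n, X ^ i : Polynomial K).support =
    Finset.range n := by
  ext e
  simp [Polynomial.mem_support_iff, coeff_S]

lemma Fold_S (n : ℕ) : Fold n (∑ i ∈ Finset.range n, X ^ i : Polynomial K) =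
    ∑ i ∈ Finset.range n, X ^ i := by
  rw [map_sum]
  apply Finset.sum_congr rfl
  intro i hi
  rw [X_pow_eq_monomial, Fold_monomial, Nat.mod_eq_of_lt (Finset.mem_range.mp hi),
    ← X_pow_eq_monomial]

lemma support_disjoint_card (u v : Polynomial K) (h : Disjoint u.support v.support) :
    (u + v).support.card = u.support.card + v.support.card := by
  have : (u + v).support = u.support ∪ v.support := by
    ext e
    simp only [Polynomial.mem_support_iff, Finset.mem_union, Polynomial.coeff_add]
    constructor
    · intro hne
      by_contra hc
      push_neg at hc
      rcases hc with ⟨h1, h2⟩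
      rw [h1, h2, add_zero] at hne
      exact hne rfl
    · intro hor
      rcases hor with h1 | h1
      · have h2 : v.coeff e = 0 := by
          by_contra hc
          exact (Finset.disjoint_left.mp h (Polynomial.mem_support_iff.mpr h1))
            (Polynomial.mem_support_iff.mpr hc)
        rw [h2, add_zero]; exact h1
      · have h2 : u.coeff e = 0 := by
          by_contra hc
          exact (Finset.disjoint_left.mp h (Polynomial.mem_support_iff.mpr hc))
            (Polynomial.mem_support_iff.mpr h1)
        rw [h2, zero_add]; exact h1
  rw [this, Finset.card_union_of_disjoint h]

theorem bound_m (m l : ℕ) (hm : Odd m) (hl1 : 1 ≤ l) (hl2 : l ≤ m - 1)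
    (f : Polynomial K)
    (hf : f = (∑ i ∈ Finset.range (m + 1), X ^ i) + X ^ l)
    (a b : ℕ) (hb : 0 < b) (hba : b < a) (ha2m : a ≤ 2 * m)
    (hdvd : f ∣ (X ^ a + X ^ b + 1)) : m ≤ 9 := by
  obtain ⟨q, hgq⟩ := hdvd
  have hm2 : 2 ≤ m := by omega
  set n := m + 1 with hn
  set S : Polynomial K := ∑ i ∈ Finset.range n, X ^ i with hSdef
  set g : Polynomial K := X ^ a + X ^ b + 1 with hgdef
  have hfS : f = S + X ^ l := hf
  -- S * (X+1) = X^n + 1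
  have hSX : S * (X + 1) = X ^ n + 1 := by
    have := geom_sum_mul (X : Polynomial K) n
    rw [hSdef]
    linear_combination this + (S - 1) * two_eq_zeroP
  -- degrees
  have hfm : f.coeff m = 1 := by
    rw [hfS, Polynomial.coeff_add, coeff_S, Polynomial.coeff_X_pow]
    rw [if_pos (by omega : m < n), if_neg (by omega : ¬ m = l), add_zero]
  have hfne : f ≠ 0 := fun h => by simp [h] at hfm
  have hg0 : g.coeff 0 = 1 := by
    rw [hgdef]
    simp only [Polynomial.coeff_add, Polynomial.coeff_X_pow, Polynomial.coeff_one]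
    rw [if_neg (by omega : ¬ (0:ℕ) = a), if_neg (by omega : ¬ (0:ℕ) = b)]
    simp
  have hqne : q ≠ 0 := by
    intro h
    rw [h, mul_zero] at hgq
    rw [hgq] at hg0
    simp at hg0
  have hdegfle : f.natDegree ≤ m := by
    rw [hfS]
    apply le_trans (Polynomial.natDegree_add_le _ _)
    have h1 : S.natDegree ≤ m := by
      apply le_trans (Polynomial.natDegree_sum_le _ _)
      simp only [Finset.fold_max_le]
      constructor
      · omega
      · intro i hi
        simp only [Function.comp]
        exact le_trans (Polynomial.natDegree_X_pow_le i) (by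
          simp only [Finset.mem_range] at hi; omega)
    have h2 : (X ^ l : Polynomial K).natDegree ≤ m :=
      le_trans (Polynomial.natDegree_X_pow_le l) (by omega)
    omega
  have hdegf : f.natDegree = m :=
    le_antisymm hdegfle (Polynomial.le_natDegree_of_ne_zero (by rw [hfm]; exact one_ne_zero))
  have hga : g.coeff a = 1 := by
    rw [hgdef]
    simp only [Polynomial.coeff_add, Polynomial.coeff_X_pow, Polynomial.coeff_one]
    rw [if_neg (by omega : ¬ a = b), if_neg (by omega : ¬ a = 0)]
    simp
  have hdeggle : g.natDegree ≤ a := by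
    rw [hgdef]
    apply le_trans (Polynomial.natDegree_add_le _ _)
    simp only [Polynomial.natDegree_one]
    have := Polynomial.natDegree_add_le (X ^ a : Polynomial K) (X ^ b)
    have ha' := Polynomial.natDegree_X_pow_le (R := K) a
    have hb' := Polynomial.natDegree_X_pow_le (R := K) b
    omega
  have hdegg : g.natDegree = a :=
    le_antisymm hdeggle (Polynomial.le_natDegree_of_ne_zero (by rw [hga]; exact one_ne_zero))
  have hdegq : q.natDegree = a - m := by
    have := Polynomial.natDegree_mul hfne hqne
    rw [← hgq, hdegg, hdegf] at this
    omega
  have hdegq' : q.natDegree ≤ n - 1 := by omega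
  -- eval at 1
  have hS1 : S.eval 1 = 0 := by
    rw [hSdef, Polynomial.eval_finset_sum]
    simp only [Polynomial.eval_pow, Polynomial.eval_X, one_pow, Finset.sum_const,
      Finset.card_range, nsmul_eq_mul, mul_one]
    obtain ⟨k, hk⟩ := hm
    have hnk : n = 2 * (k + 1) := by omega
    rw [hnk]
    push_cast
    rw [show ((2:K)) = 0 from by decide]
    ring
  have hf1 : f.eval 1 = 1 := by
    rw [hfS, Polynomial.eval_add, hS1, Polynomial.eval_pow, Polynomial.eval_X, one_pow, zero_add]
  have hg1 : g.eval 1 = 1 := by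
    rw [hgdef]
    simp
    decide
  have hq1 : q.eval 1 = 1 := by
    have := hgq
    have h2 : g.eval 1 = f.eval 1 * q.eval 1 := by rw [this, Polynomial.eval_mul]
    rw [hg1, hf1, one_mul] at h2
    exact h2.symm
  -- q + 1 = (X+1) * t
  obtain ⟨t, ht⟩ : (X + 1 : Polynomial K) ∣ (q + 1) := by
    have hroot : Polynomial.IsRoot (q + 1) 1 := by
      simp [Polynomial.IsRoot, hq1]
      decide
    have := (Polynomial.dvd_iff_isRoot (p := q + 1) (a := 1)).mpr hroot
    have heq : (X - Polynomial.C 1 : Polynomial K) = X + 1 := by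
      rw [map_one]
      linear_combination (-1 : Polynomial K) * two_eq_zeroP
    rwa [heq] at this
  -- key identities
  have idC : X ^ l * q = g + S + (X ^ n + 1) * t := by
    linear_combination (-1 : Polynomial K) * hgq - q * hfS - S * ht + t * hSX
      - (S * X * t + S * t) * two_eq_zeroP
  set T : Polynomial K := (X + 1) * g with hTdef
  set p : Polynomial K := (X + 1) * q with hpdef
  have idD : T = (X ^ n + 1) * q + X ^ l * p := by
    rw [hTdef, hpdef]
    linear_combination (X + 1) * hgq + (X + 1) * q * hfS + q * hSX
  -- Fold facts
  have hFoldC : Fold n (X ^ l * q) = Fold n g + S := by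
    rw [idC, map_add, map_add, Fold_Xn_add_one_mul, add_zero, Fold_S]
  have hFoldD : Fold n (X ^ l * p) = Fold n T := by
    rw [idD, map_add, Fold_Xn_add_one_mul, zero_add]
  -- weight of q is at least n - 3
  have hwq : n ≤ q.support.card + 3 := by
    have hS' : S = Fold n (X ^ l * q) + Fold n g := by
      rw [hFoldC]
      rw [add_comm (Fold n g) S, add_assoc, charTwoP, add_zero]
    have h1 : S.support.card ≤ (Fold n (X ^ l * q)).support.card + (Fold n g).support.card := by
      rw [hS']; exact wle _ _
    have h2 : (Fold n (X ^ l * q)).support.card = q.support.card :=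
      Fold_card_shift n l q hdegq' (by omega)
    have h3 : (Fold n g).support.card ≤ 3 := by
      apply le_trans (Fold_card_le n g)
      rw [hgdef]
      have w1 := wle (X ^ a + X ^ b : Polynomial K) 1
      have w2 := wle (X ^ a : Polynomial K) (X ^ b)
      have w3 := card_support_X_pow_le a
      have w4 := card_support_X_pow_le b
      have w5 : (1 : Polynomial K).support.card ≤ 1 := by
        rw [← pow_zero (X : Polynomial K)]
        exact card_support_X_pow_le 0
      omega
    have h4 : S.support.card = n := by rw [support_S, Finset.card_range]
    omega
  -- weight of T at most 6
  have hwT : T.support.card ≤ 6 := by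
    have hTexp : T = X ^ (a+1) + X ^ a + X ^ (b+1) + X ^ b + X + 1 := by
      rw [hTdef, hgdef]; ring
    rw [hTexp]
    have w1 := wle (X ^ (a+1) + X ^ a + X ^ (b+1) + X ^ b + X : Polynomial K) 1
    have w2 := wle (X ^ (a+1) + X ^ a + X ^ (b+1) + X ^ b : Polynomial K) X
    have w3 := wle (X ^ (a+1) + X ^ a + X ^ (b+1) : Polynomial K) (X ^ b)
    have w4 := wle (X ^ (a+1) + X ^ a : Polynomial K) (X ^ (b+1))
    have w5 := wle (X ^ (a+1) : Polynomial K) (X ^ a)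
    have c1 := card_support_X_pow_le (a+1)
    have c2 := card_support_X_pow_le a
    have c3 := card_support_X_pow_le (b+1)
    have c4 := card_support_X_pow_le b
    have c5 : (X : Polynomial K).support.card ≤ 1 := by
      rw [← pow_one (X : Polynomial K)]; exact card_support_X_pow_le 1
    have c6 : (1 : Polynomial K).support.card ≤ 1 := by
      rw [← pow_zero (X : Polynomial K)]; exact card_support_X_pow_le 0
    omega
  -- weight of p at most 8
  have hdegp : p.natDegree ≤ n := by
    rw [hpdef]
    apply le_trans (Polynomial.natDegree_mul_le)
    have : (X + 1 : Polynomial K).natDegree ≤ 1 := by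
      apply le_trans (Polynomial.natDegree_add_le _ _)
      simp
    omega
  have hwp : p.support.card ≤ 8 := by
    set p' : Polynomial K := p.eraseLead with hp'def
    set M : Polynomial K := Polynomial.monomial p.natDegree p.leadingCoeff with hMdef
    have hpM : p' + M = p := Polynomial.eraseLead_add_monomial_natDegree_leadingCoeff p
    have hdegp' : p'.natDegree ≤ n - 1 := by
      rw [hp'def]
      have := Polynomial.eraseLead_natDegree_le p
      omega
    have hfold' : (Fold n (X ^ l * p')).support.card = p'.support.card :=
      Fold_card_shift n l p' hdegp' (by omega)
    have hsplit : Fold n (X ^ l * p') + Fold n (X ^ l * M) = Fold n (X ^ l * p) := by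
      rw [← map_add, ← mul_add, hpM]
    have hwM : (Fold n (X ^ l * M)).support.card ≤ 1 := by
      apply le_trans (Fold_card_le _ _)
      rw [card_support_X_pow_mul]
      rw [hMdef]
      exact le_trans (Finset.card_le_card (Polynomial.support_monomial' _ _)) (by simp)
    have h1 : (Fold n (X ^ l * p')).support.card ≤
        (Fold n (X ^ l * p)).support.card + (Fold n (X ^ l * M)).support.card := by
      have hw := wge (Fold n (X ^ l * p')) (Fold n (X ^ l * M))
      rw [hsplit] at hw
      exact hw
    have h2 : (Fold n (X ^ l * p)).support.card ≤ 6 := by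
      rw [hFoldD]
      exact le_trans (Fold_card_le _ _) hwT
    have h3 : p.support.card ≤ p'.support.card + 1 := by
      have := wle p' M
      have hM1 : M.support.card ≤ 1 := by
        rw [hMdef]
        exact le_trans (Finset.card_le_card (Polynomial.support_monomial' _ _)) (by simp)
      rw [hpM] at this
      omega
    omega
  -- 2 * w(q) ≤ w(T) + w(p)
  have hws : 2 * q.support.card ≤ T.support.card + p.support.card := by
    have hdisj : Disjoint (X ^ n * q).support q.support := by
      rw [support_X_pow_mul]
      rw [Finset.disjoint_left]
      intro e he hee
      simp only [Finset.mem_image] at he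
      obtain ⟨i, hi, rfl⟩ := he
      have : n + i ≤ q.natDegree := Polynomial.le_natDegree_of_mem_supp _ hee
      omega
    have hcard : ((X ^ n * q) + q).support.card = 2 * q.support.card := by
      rw [support_disjoint_card _ _ hdisj, card_support_X_pow_mul]
      ring
    have hA : (X ^ n + 1) * q = (X ^ n * q) + q := by ring
    have hTA : (X ^ n * q) + q = T + X ^ l * p := by
      rw [idD, hA]
      rw [add_assoc, charTwoP, add_zero]
    have := wle T (X ^ l * p)
    rw [← hTA] at this
    rw [card_support_X_pow_mul] at this
    omega
  omega


lemma reflect_X' (N : ℕ) : reflect N (X : Polynomial K) = X ^ (revAt N 1) := by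
  rw [← pow_one (X : Polynomial K), reflect_monomial, pow_one]

def A73 : Matrix (Fin 7) (Fin 7) K :=
  !![0,0,0,0,0,0,1;
     1,0,0,0,0,0,1;
     0,1,0,0,0,0,1;
     0,0,1,0,0,0,0;
     0,0,0,1,0,0,1;
     0,0,0,0,1,0,1;
     0,0,0,0,0,1,1]

set_option maxRecDepth 100000 in
lemma noA73 : ∀ a ∈ Finset.range 15, ∀ b ∈ Finset.range a, b = 0 ∨ A73^a + A73^b + 1 ≠ 0 := by
  decide

def A74 : Matrix (Fin 7) (Fin 7) K :=
  !![0,0,0,0,0,0,1;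
     1,0,0,0,0,0,1;
     0,1,0,0,0,0,1;
     0,0,1,0,0,0,1;
     0,0,0,1,0,0,0;
     0,0,0,0,1,0,1;
     0,0,0,0,0,1,1]

set_option maxRecDepth 100000 in
lemma noA74 : ∀ a ∈ Finset.range 15, ∀ b ∈ Finset.range a, b = 0 ∨ A74^a + A74^b + 1 ≠ 0 := by
  decide

def A91 : Matrix (Fin 9) (Fin 9) K :=
  !![0,0,0,0,0,0,0,0,1;
     1,0,0,0,0,0,0,0,0;
     0,1,0,0,0,0,0,0,1;
     0,0,1,0,0,0,0,0,1;
     0,0,0,1,0,0,0,0,1;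
     0,0,0,0,1,0,0,0,1;
     0,0,0,0,0,1,0,0,1;
     0,0,0,0,0,0,1,0,1;
     0,0,0,0,0,0,0,1,1]

set_option maxRecDepth 100000 in
lemma noA91 : ∀ a ∈ Finset.range 19, ∀ b ∈ Finset.range a, b = 0 ∨ A91^a + A91^b + 1 ≠ 0 := by
  decide

def A92 : Matrix (Fin 9) (Fin 9) K :=
  !![0,0,0,0,0,0,0,0,1;
     1,0,0,0,0,0,0,0,1;
     0,1,0,0,0,0,0,0,0;
     0,0,1,0,0,0,0,0,1;
     0,0,0,1,0,0,0,0,1;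
     0,0,0,0,1,0,0,0,1;
     0,0,0,0,0,1,0,0,1;
     0,0,0,0,0,0,1,0,1;
     0,0,0,0,0,0,0,1,1]

set_option maxRecDepth 100000 in
lemma noA92 : ∀ a ∈ Finset.range 19, ∀ b ∈ Finset.range a, b = 0 ∨ A92^a + A92^b + 1 ≠ 0 := by
  decide

def A93 : Matrix (Fin 9) (Fin 9) K :=
  !![0,0,0,0,0,0,0,0,1;
     1,0,0,0,0,0,0,0,1;
     0,1,0,0,0,0,0,0,1;
     0,0,1,0,0,0,0,0,0;
     0,0,0,1,0,0,0,0,1;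
     0,0,0,0,1,0,0,0,1;
     0,0,0,0,0,1,0,0,1;
     0,0,0,0,0,0,1,0,1;
     0,0,0,0,0,0,0,1,1]

set_option maxRecDepth 100000 in
lemma noA93 : ∀ a ∈ Finset.range 19, ∀ b ∈ Finset.range a, b = 0 ∨ A93^a + A93^b + 1 ≠ 0 := by
  decide

def A94 : Matrix (Fin 9) (Fin 9) K :=
  !![0,0,0,0,0,0,0,0,1;
     1,0,0,0,0,0,0,0,1;
     0,1,0,0,0,0,0,0,1;
     0,0,1,0,0,0,0,0,1;
     0,0,0,1,0,0,0,0,0;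
     0,0,0,0,1,0,0,0,1;
     0,0,0,0,0,1,0,0,1;
     0,0,0,0,0,0,1,0,1;
     0,0,0,0,0,0,0,1,1]

set_option maxRecDepth 100000 in
lemma noA94 : ∀ a ∈ Finset.range 19, ∀ b ∈ Finset.range a, b = 0 ∨ A94^a + A94^b + 1 ≠ 0 := by
  decide

def A95 : Matrix (Fin 9) (Fin 9) K :=
  !![0,0,0,0,0,0,0,0,1;
     1,0,0,0,0,0,0,0,1;
     0,1,0,0,0,0,0,0,1;
     0,0,1,0,0,0,0,0,1;
     0,0,0,1,0,0,0,0,1;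
     0,0,0,0,1,0,0,0,0;
     0,0,0,0,0,1,0,0,1;
     0,0,0,0,0,0,1,0,1;
     0,0,0,0,0,0,0,1,1]

set_option maxRecDepth 100000 in
lemma noA95 : ∀ a ∈ Finset.range 19, ∀ b ∈ Finset.range a, b = 0 ∨ A95^a + A95^b + 1 ≠ 0 := by
  decide

def A96 : Matrix (Fin 9) (Fin 9) K :=
  !![0,0,0,0,0,0,0,0,1;
     1,0,0,0,0,0,0,0,1;
     0,1,0,0,0,0,0,0,1;
     0,0,1,0,0,0,0,0,1;
     0,0,0,1,0,0,0,0,1;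
     0,0,0,0,1,0,0,0,1;
     0,0,0,0,0,1,0,0,0;
     0,0,0,0,0,0,1,0,1;
     0,0,0,0,0,0,0,1,1]

set_option maxRecDepth 100000 in
lemma noA96 : ∀ a ∈ Finset.range 19, ∀ b ∈ Finset.range a, b = 0 ∨ A96^a + A96^b + 1 ≠ 0 := by
  decide

def A97 : Matrix (Fin 9) (Fin 9) K :=
  !![0,0,0,0,0,0,0,0,1;
     1,0,0,0,0,0,0,0,1;
     0,1,0,0,0,0,0,0,1;
     0,0,1,0,0,0,0,0,1;
     0,0,0,1,0,0,0,0,1;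
     0,0,0,0,1,0,0,0,1;
     0,0,0,0,0,1,0,0,1;
     0,0,0,0,0,0,1,0,0;
     0,0,0,0,0,0,0,1,1]

set_option maxRecDepth 100000 in
lemma noA97 : ∀ a ∈ Finset.range 19, ∀ b ∈ Finset.range a, b = 0 ∨ A97^a + A97^b + 1 ≠ 0 := by
  decide

def A98 : Matrix (Fin 9) (Fin 9) K :=
  !![0,0,0,0,0,0,0,0,1;
     1,0,0,0,0,0,0,0,1;
     0,1,0,0,0,0,0,0,1;
     0,0,1,0,0,0,0,0,1;
     0,0,0,1,0,0,0,0,1;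
     0,0,0,0,1,0,0,0,1;
     0,0,0,0,0,1,0,0,1;
     0,0,0,0,0,0,1,0,1;
     0,0,0,0,0,0,0,1,0]

set_option maxRecDepth 100000 in
lemma noA98 : ∀ a ∈ Finset.range 19, ∀ b ∈ Finset.range a, b = 0 ∨ A98^a + A98^b + 1 ≠ 0 := by
  decide

set_option maxRecDepth 1000000 in
theorem maxweight_divides_trinomial_exceptions (m l : ℕ) (hm : Odd m)
    (hl1 : 1 ≤ l) (hl2 : l ≤ m - 1)
    (f : Polynomial (ZMod 2))
    (hf : f = (∑ i ∈ Finset.range (m + 1), X ^ i) + X ^ l)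
    (hdvd : ∃ a b : ℕ, 0 < b ∧ b < a ∧ a ≤ 2 * m ∧ f ∣ (X ^ a + X ^ b + 1)) :
    f = X ^ 3 + X + 1 ∨
    f = X ^ 3 + X ^ 2 + 1 ∨
    f = X ^ 5 + X ^ 3 + X ^ 2 + X + 1 ∨
    f = X ^ 5 + X ^ 4 + X ^ 3 + X + 1 ∨
    f = X ^ 5 + X ^ 4 + X ^ 3 + X ^ 2 + 1 ∨
    f = X ^ 7 + X ^ 6 + X ^ 5 + X ^ 4 + X ^ 3 + X + 1 ∨
    f = X ^ 7 + X ^ 6 + X ^ 5 + X ^ 4 + X ^ 3 + X ^ 2 + 1 ∨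
    f.reverse = X ^ 3 + X + 1 ∨
    f.reverse = X ^ 3 + X ^ 2 + 1 ∨
    f.reverse = X ^ 5 + X ^ 3 + X ^ 2 + X + 1 ∨
    f.reverse = X ^ 5 + X ^ 4 + X ^ 3 + X + 1 ∨
    f.reverse = X ^ 5 + X ^ 4 + X ^ 3 + X ^ 2 + 1 ∨
    f.reverse = X ^ 7 + X ^ 6 + X ^ 5 + X ^ 4 + X ^ 3 + X + 1 ∨
    f.reverse = X ^ 7 + X ^ 6 + X ^ 5 + X ^ 4 + X ^ 3 + X ^ 2 + 1 := by
  obtain ⟨a, b, hb, hba, ha2m, hdvd'⟩ := hdvd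
  have hm9 : m ≤ 9 := bound_m m l hm hl1 hl2 f hf a b hb hba ha2m hdvd'
  have hm2 : 2 ≤ m := by omega
  interval_cases m
  · exact absurd hm (by decide)
  · interval_cases l
    · -- in list, disjunct 2
      refine Or.inr (Or.inl ?_)
      rw [hf]
      simp [Finset.sum_range_succ]
      ring_nf
      rw [two_eq_zeroP]
      ring
    · -- in list, disjunct 1
      refine Or.inl ?_
      rw [hf]
      simp [Finset.sum_range_succ]
      ring_nf
      rw [two_eq_zeroP]
      ring
  · exact absurd hm (by decide)
  · interval_cases l
    · -- in list, disjunct 5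
      refine Or.inr (Or.inr (Or.inr (Or.inr (Or.inl ?_))))
      rw [hf]
      simp [Finset.sum_range_succ]
      ring_nf
      rw [two_eq_zeroP]
      ring
    · -- in list, disjunct 4
      refine Or.inr (Or.inr (Or.inr (Or.inl ?_)))
      rw [hf]
      simp [Finset.sum_range_succ]
      ring_nf
      rw [two_eq_zeroP]
      ring
    · -- reverse in list, disjunct 11
      refine Or.inr (Or.inr (Or.inr (Or.inr (Or.inr (Or.inr (Or.inr (Or.inr (Or.inr (Or.inr (Or.inl ?_))))))))))
      have hexp : f = 1 + X + X ^ 2 + X ^ 4 + X ^ 5 := by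
        rw [hf]
        simp [Finset.sum_range_succ]
        ring_nf
        rw [two_eq_zeroP]
        ring
      rw [hexp]
      have hd : (1 + X + X ^ 2 + X ^ 4 + X ^ 5 : Polynomial K).natDegree = 5 := by
        compute_degree!
      unfold Polynomial.reverse
      rw [hd]
      simp [reflect_add, reflect_monomial, reflect_X']
    · -- in list, disjunct 3
      refine Or.inr (Or.inr (Or.inl ?_))
      rw [hf]
      simp [Finset.sum_range_succ]
      ring_nf
      rw [two_eq_zeroP]
      ring
  · exact absurd hm (by decide)
  · interval_cases l
    · -- in list, disjunct 7
      refine Or.inr (Or.inr (Or.inr (Or.inr (Or.inr (Or.inr (Or.inl ?_))))))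
      rw [hf]
      simp [Finset.sum_range_succ]
      ring_nf
      rw [two_eq_zeroP]
      ring
    · -- in list, disjunct 6
      refine Or.inr (Or.inr (Or.inr (Or.inr (Or.inr (Or.inl ?_)))))
      rw [hf]
      simp [Finset.sum_range_succ]
      ring_nf
      rw [two_eq_zeroP]
      ring
    · -- impossible case, refuted via companion matrix A73
      exfalso
      obtain ⟨q, hgq⟩ := hdvd'
      have hev : Polynomial.aeval (R := K) A73 f = 0 := by
        rw [hf]
        simp only [map_add, map_sum, map_pow, Polynomial.aeval_X]
        decide
      have hgv : Polynomial.aeval (R := K) A73 (X ^ a + X ^ b + 1) = 0 := by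
        rw [hgq, map_mul, hev, zero_mul]
      simp only [map_add, map_pow, Polynomial.aeval_X, map_one] at hgv
      rcases noA73 a (Finset.mem_range.mpr (by omega)) b (Finset.mem_range.mpr hba) with h | h
      · omega
      · exact h hgv
    · -- impossible case, refuted via companion matrix A74
      exfalso
      obtain ⟨q, hgq⟩ := hdvd'
      have hev : Polynomial.aeval (R := K) A74 f = 0 := by
        rw [hf]
        simp only [map_add, map_sum, map_pow, Polynomial.aeval_X]
        decide
      have hgv : Polynomial.aeval (R := K) A74 (X ^ a + X ^ b + 1) = 0 := by
        rw [hgq, map_mul, hev, zero_mul]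
      simp only [map_add, map_pow, Polynomial.aeval_X, map_one] at hgv
      rcases noA74 a (Finset.mem_range.mpr (by omega)) b (Finset.mem_range.mpr hba) with h | h
      · omega
      · exact h hgv
    · -- reverse in list, disjunct 13
      refine Or.inr (Or.inr (Or.inr (Or.inr (Or.inr (Or.inr (Or.inr (Or.inr (Or.inr (Or.inr (Or.inr (Or.inr (Or.inl ?_))))))))))))
      have hexp : f = 1 + X + X ^ 2 + X ^ 3 + X ^ 4 + X ^ 6 + X ^ 7 := by
        rw [hf]
        simp [Finset.sum_range_succ]
        ring_nf
        rw [two_eq_zeroP]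
        ring
      rw [hexp]
      have hd : (1 + X + X ^ 2 + X ^ 3 + X ^ 4 + X ^ 6 + X ^ 7 : Polynomial K).natDegree = 7 := by
        compute_degree!
      unfold Polynomial.reverse
      rw [hd]
      simp [reflect_add, reflect_monomial, reflect_X']
    · -- reverse in list, disjunct 14
      refine Or.inr (Or.inr (Or.inr (Or.inr (Or.inr (Or.inr (Or.inr (Or.inr (Or.inr (Or.inr (Or.inr (Or.inr (Or.inr (?_)))))))))))))
      have hexp : f = 1 + X + X ^ 2 + X ^ 3 + X ^ 4 + X ^ 5 + X ^ 7 := by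
        rw [hf]
        simp [Finset.sum_range_succ]
        ring_nf
        rw [two_eq_zeroP]
        ring
      rw [hexp]
      have hd : (1 + X + X ^ 2 + X ^ 3 + X ^ 4 + X ^ 5 + X ^ 7 : Polynomial K).natDegree = 7 := by
        compute_degree!
      unfold Polynomial.reverse
      rw [hd]
      simp [reflect_add, reflect_monomial, reflect_X']
  · exact absurd hm (by decide)
  · interval_cases l
    · -- impossible case, refuted via companion matrix A91
      exfalso
      obtain ⟨q, hgq⟩ := hdvd'
      have hev : Polynomial.aeval (R := K) A91 f = 0 := by
        rw [hf]
        simp only [map_add, map_sum, map_pow, Polynomial.aeval_X]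
        decide
      have hgv : Polynomial.aeval (R := K) A91 (X ^ a + X ^ b + 1) = 0 := by
        rw [hgq, map_mul, hev, zero_mul]
      simp only [map_add, map_pow, Polynomial.aeval_X, map_one] at hgv
      rcases noA91 a (Finset.mem_range.mpr (by omega)) b (Finset.mem_range.mpr hba) with h | h
      · omega
      · exact h hgv
    · -- impossible case, refuted via companion matrix A92
      exfalso
      obtain ⟨q, hgq⟩ := hdvd'
      have hev : Polynomial.aeval (R := K) A92 f = 0 := by
        rw [hf]
        simp only [map_add, map_sum, map_pow, Polynomial.aeval_X]
        decide
      have hgv : Polynomial.aeval (R := K) A92 (X ^ a + X ^ b + 1) = 0 := by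
        rw [hgq, map_mul, hev, zero_mul]
      simp only [map_add, map_pow, Polynomial.aeval_X, map_one] at hgv
      rcases noA92 a (Finset.mem_range.mpr (by omega)) b (Finset.mem_range.mpr hba) with h | h
      · omega
      · exact h hgv
    · -- impossible case, refuted via companion matrix A93
      exfalso
      obtain ⟨q, hgq⟩ := hdvd'
      have hev : Polynomial.aeval (R := K) A93 f = 0 := by
        rw [hf]
        simp only [map_add, map_sum, map_pow, Polynomial.aeval_X]
        decide
      have hgv : Polynomial.aeval (R := K) A93 (X ^ a + X ^ b + 1) = 0 := by
        rw [hgq, map_mul, hev, zero_mul]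
      simp only [map_add, map_pow, Polynomial.aeval_X, map_one] at hgv
      rcases noA93 a (Finset.mem_range.mpr (by omega)) b (Finset.mem_range.mpr hba) with h | h
      · omega
      · exact h hgv
    · -- impossible case, refuted via companion matrix A94
      exfalso
      obtain ⟨q, hgq⟩ := hdvd'
      have hev : Polynomial.aeval (R := K) A94 f = 0 := by
        rw [hf]
        simp only [map_add, map_sum, map_pow, Polynomial.aeval_X]
        decide
      have hgv : Polynomial.aeval (R := K) A94 (X ^ a + X ^ b + 1) = 0 := by
        rw [hgq, map_mul, hev, zero_mul]
      simp only [map_add, map_pow, Polynomial.aeval_X, map_one] at hgv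
      rcases noA94 a (Finset.mem_range.mpr (by omega)) b (Finset.mem_range.mpr hba) with h | h
      · omega
      · exact h hgv
    · -- impossible case, refuted via companion matrix A95
      exfalso
      obtain ⟨q, hgq⟩ := hdvd'
      have hev : Polynomial.aeval (R := K) A95 f = 0 := by
        rw [hf]
        simp only [map_add, map_sum, map_pow, Polynomial.aeval_X]
        decide
      have hgv : Polynomial.aeval (R := K) A95 (X ^ a + X ^ b + 1) = 0 := by
        rw [hgq, map_mul, hev, zero_mul]
      simp only [map_add, map_pow, Polynomial.aeval_X, map_one] at hgv
      rcases noA95 a (Finset.mem_range.mpr (by omega)) b (Finset.mem_range.mpr hba) with h | h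
      · omega
      · exact h hgv
    · -- impossible case, refuted via companion matrix A96
      exfalso
      obtain ⟨q, hgq⟩ := hdvd'
      have hev : Polynomial.aeval (R := K) A96 f = 0 := by
        rw [hf]
        simp only [map_add, map_sum, map_pow, Polynomial.aeval_X]
        decide
      have hgv : Polynomial.aeval (R := K) A96 (X ^ a + X ^ b + 1) = 0 := by
        rw [hgq, map_mul, hev, zero_mul]
      simp only [map_add, map_pow, Polynomial.aeval_X, map_one] at hgv
      rcases noA96 a (Finset.mem_range.mpr (by omega)) b (Finset.mem_range.mpr hba) with h | h
      · omega
      · exact h hgv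
    · -- impossible case, refuted via companion matrix A97
      exfalso
      obtain ⟨q, hgq⟩ := hdvd'
      have hev : Polynomial.aeval (R := K) A97 f = 0 := by
        rw [hf]
        simp only [map_add, map_sum, map_pow, Polynomial.aeval_X]
        decide
      have hgv : Polynomial.aeval (R := K) A97 (X ^ a + X ^ b + 1) = 0 := by
        rw [hgq, map_mul, hev, zero_mul]
      simp only [map_add, map_pow, Polynomial.aeval_X, map_one] at hgv
      rcases noA97 a (Finset.mem_range.mpr (by omega)) b (Finset.mem_range.mpr hba) with h | h
      · omega
      · exact h hgv
    · -- impossible case, refuted via companion matrix A98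
      exfalso
      obtain ⟨q, hgq⟩ := hdvd'
      have hev : Polynomial.aeval (R := K) A98 f = 0 := by
        rw [hf]
        simp only [map_add, map_sum, map_pow, Polynomial.aeval_X]
        decide
      have hgv : Polynomial.aeval (R := K) A98 (X ^ a + X ^ b + 1) = 0 := by
        rw [hgq, map_mul, hev, zero_mul]
      simp only [map_add, map_pow, Polynomial.aeval_X, map_one] at hgv
      rcases noA98 a (Finset.mem_range.mpr (by omega)) b (Finset.mem_range.mpr hba) with h | h
      · omega
      · exact h hgv
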